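/- Let N ≥ 3 be a natural number (so the Virasoro index n = −N satisfies n < −2) and let θ > 0 be real. Define χ(φ) = ∫_φ^1 (1 + N·θ·t^(−N))^(1 − 1/N) dt for 0 < φ ≤ 1, the canonically normalized field measured from the reference point φ = 1. Then χ diverges as φ → 0⁺ with the power-law asymptotics lim_{φ→0⁺} φ^(N−2) · χ(φ) = (Nθ)^(1 − 1/N) / (N − 2); equivalently χ(φ) ∝ φ^{2−N} near φ = 0, which inverts to φ ≈ B_n χ^{1/(2−N)} up to the constant B_n = ((2−N)/(Nθ)^{1−1/N})^{1/(2−N)}. -/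

import Mathlib

lemma aux_rpow_add_le (x y p : ℝ) (hx : 0 ≤ x) (hy : 0 ≤ y) (hp : 0 ≤ p) (hp1 : p ≤ 1) :
    (x + y) ^ p ≤ x ^ p + y ^ p := by
  have h := NNReal.rpow_add_le_add_rpow (⟨x, hx⟩ : NNReal) (⟨y, hy⟩ : NNReal) hp hp1
  exact_mod_cast h

theorem canonical_field_asymptotics_neg_index (N : ℕ) (hN : 3 ≤ N) (θ : ℝ)
    (hθ : 0 < θ) :
    Filter.Tendsto
      (fun φ : ℝ => φ ^ ((N : ℝ) - 2) *
        ∫ t in φ..(1 : ℝ), (1 + (N : ℝ) * θ * t ^ (-(N : ℝ))) ^ (1 - 1 / (N : ℝ)))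
      (nhdsWithin 0 (Set.Ioi 0))
      (nhds (((N : ℝ) * θ) ^ (1 - 1 / (N : ℝ)) / ((N : ℝ) - 2))) := by
  set n : ℝ := (N : ℝ) with hn
  have hn3 : (3 : ℝ) ≤ n := by rw [hn]; exact_mod_cast hN
  have hn0 : (0 : ℝ) < n := by linarith
  set p : ℝ := 1 - 1 / n with hpdef
  set a : ℝ := n * θ with ha
  have ha0 : (0 : ℝ) < a := mul_pos hn0 hθ
  have hp0 : 0 ≤ p := by
    have : 1 / n ≤ 1 := by rw [div_le_one hn0]; linarith
    simp only [hpdef]; linarith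
  have hp1 : p ≤ 1 := by
    have : 0 < 1 / n := by positivity
    simp only [hpdef]; linarith
  set c : ℝ := a ^ p with hc
  set F : ℝ → ℝ := fun φ => ∫ t in φ..(1 : ℝ), (1 + a * t ^ (-n)) ^ p with hF
  -- pointwise rewriting of the integrand
  have key : ∀ t : ℝ, 0 < t →
      (1 + a * t ^ (-n)) ^ p = t ^ (1 - n) * (t ^ n + a) ^ p := by
    intro t ht
    have h1 : 1 + a * t ^ (-n) = t ^ (-n) * (t ^ n + a) := by
      have h2 : t ^ (-n) * t ^ n = 1 := by
        rw [← Real.rpow_add ht]; simp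
      rw [mul_add, h2]; ring
    rw [h1, Real.mul_rpow (Real.rpow_nonneg ht.le _) (by positivity),
      ← Real.rpow_mul ht.le]
    congr 2
    field_simp [hpdef]
    rw [hpdef, mul_sub, mul_one_div_cancel hn0.ne']; ring
  -- eventual set
  have h01 : ∀ᶠ φ in nhdsWithin (0 : ℝ) (Set.Ioi 0), φ ∈ Set.Ioo (0 : ℝ) 1 :=
    Ioo_mem_nhdsGT_of_mem (by norm_num : (0 : ℝ) ∈ Set.Ico (0 : ℝ) 1)
  -- φ ^ (n-2) → 0
  have h1 : Filter.Tendsto (fun φ : ℝ => φ ^ (n - 2)) (nhdsWithin 0 (Set.Ioi 0))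
      (nhds 0) := by
    have hco := (Real.continuousAt_rpow_const 0 (n - 2) (Or.inr (by linarith))).tendsto
    have := hco.mono_left (nhdsWithin_le_nhds (s := Set.Ioi (0 : ℝ)))
    simpa [Real.zero_rpow (by linarith : n - 2 ≠ 0)] using this
  -- bounds on the remainder D φ
  have hD : ∀ φ ∈ Set.Ioo (0 : ℝ) 1,
      0 ≤ F φ - c * (φ ^ (2 - n) - 1) / (n - 2) ∧
      F φ - c * (φ ^ (2 - n) - 1) / (n - 2) ≤ 1 := by
    intro φ hφ
    obtain ⟨hφ0, hφ1⟩ := hφ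
    have hpos : ∀ t ∈ Set.uIcc φ 1, (0 : ℝ) < t := by
      intro t ht
      rw [Set.uIcc_of_le hφ1.le] at ht
      exact lt_of_lt_of_le hφ0 ht.1
    -- continuity of the integrand
    have hcf : ContinuousOn (fun t : ℝ => (1 + a * t ^ (-n)) ^ p) (Set.uIcc φ 1) := by
      apply ContinuousOn.rpow_const
      · exact continuousOn_const.add (continuousOn_const.mul
          (ContinuousOn.rpow_const continuousOn_id
            (fun t ht => Or.inl (ne_of_gt (hpos t ht)))))
      · intro t _; exact Or.inr hp0
    have hcg : ContinuousOn (fun t : ℝ => c * t ^ (1 - n)) (Set.uIcc φ 1) :=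
      continuousOn_const.mul (ContinuousOn.rpow_const continuousOn_id
        (fun t ht => Or.inl (ne_of_gt (hpos t ht))))
    have hif : IntervalIntegrable (fun t : ℝ => (1 + a * t ^ (-n)) ^ p)
        MeasureTheory.volume φ 1 := hcf.intervalIntegrable
    have hig : IntervalIntegrable (fun t : ℝ => c * t ^ (1 - n))
        MeasureTheory.volume φ 1 := hcg.intervalIntegrable
    -- compute the power integral
    have hint : (∫ t in φ..(1 : ℝ), c * t ^ (1 - n)) = c * (φ ^ (2 - n) - 1) / (n - 2) := by
      rw [intervalIntegral.integral_const_mul, integral_rpow]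
      · rw [Real.one_rpow]
        have : (1 : ℝ) - n + 1 = 2 - n := by ring
        rw [this]
        have h2 : n - 2 ≠ 0 := by linarith
        have h2' : (2 : ℝ) - n ≠ 0 := by linarith
        field_simp
        ring
      · right
        constructor
        · intro h
          have : n = 2 := by linarith [sub_eq_iff_eq_add.mp h]
          linarith
        · intro h
          exact absurd (hpos 0 h) (lt_irrefl 0)
    rw [← hint, ← intervalIntegral.integral_sub hif hig]
    -- pointwise bounds on the difference
    have hbound : ∀ t ∈ Set.Icc φ 1,
        0 ≤ (1 + a * t ^ (-n)) ^ p - c * t ^ (1 - n) ∧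
        (1 + a * t ^ (-n)) ^ p - c * t ^ (1 - n) ≤ 1 := by
      intro t ht
      have ht0 : 0 < t := lt_of_lt_of_le hφ0 ht.1
      have htn : (0 : ℝ) ≤ t ^ n := Real.rpow_nonneg ht0.le _
      rw [key t ht0]
      have hca : c ≤ (t ^ n + a) ^ p :=
        Real.rpow_le_rpow ha0.le (by linarith) hp0
      have hcb : (t ^ n + a) ^ p ≤ (t ^ n) ^ p + c :=
        aux_rpow_add_le (t ^ n) a p htn ha0.le hp0 hp1
      have hmul : t ^ (1 - n) * (t ^ n) ^ p = 1 := by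
        rw [← Real.rpow_mul ht0.le, ← Real.rpow_add ht0]
        have : 1 - n + n * p = 0 := by
          simp only [hpdef]; field_simp; ring
        rw [this, Real.rpow_zero]
      have htpow : (0 : ℝ) ≤ t ^ (1 - n) := Real.rpow_nonneg ht0.le _
      constructor
      · have := mul_le_mul_of_nonneg_left hca htpow
        nlinarith
      · have := mul_le_mul_of_nonneg_left hcb htpow
        nlinarith [hmul]
    constructor
    · exact intervalIntegral.integral_nonneg hφ1.le (fun t ht => (hbound t ht).1)
    · calc (∫ t in φ..(1:ℝ), ((1 + a * t ^ (-n)) ^ p - c * t ^ (1 - n)))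
          ≤ ∫ _t in φ..(1:ℝ), (1 : ℝ) :=
            intervalIntegral.integral_mono_on hφ1.le (hif.sub hig)
              intervalIntegrable_const (fun t ht => (hbound t ht).2)
        _ ≤ 1 := by
            rw [intervalIntegral.integral_const]
            simp
            linarith
  -- main decomposition and limit
  have hmain : Filter.Tendsto
      (fun φ : ℝ => c / (n - 2) * (1 - φ ^ (n - 2)) +
        φ ^ (n - 2) * (F φ - c * (φ ^ (2 - n) - 1) / (n - 2)))
      (nhdsWithin 0 (Set.Ioi 0)) (nhds (c / (n - 2))) := by
    have t1 : Filter.Tendsto (fun φ : ℝ => c / (n - 2) * (1 - φ ^ (n - 2)))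
        (nhdsWithin 0 (Set.Ioi 0)) (nhds (c / (n - 2))) := by
      have := ((tendsto_const_nhds (x := (1 : ℝ))).sub h1).const_mul (c / (n - 2))
      simpa using this
    have t2 : Filter.Tendsto
        (fun φ : ℝ => φ ^ (n - 2) * (F φ - c * (φ ^ (2 - n) - 1) / (n - 2)))
        (nhdsWithin 0 (Set.Ioi 0)) (nhds 0) := by
      apply squeeze_zero'
      · filter_upwards [h01] with φ hφ
        exact mul_nonneg (Real.rpow_nonneg hφ.1.le _) (hD φ hφ).1
      · filter_upwards [h01] with φ hφ
        calc φ ^ (n - 2) * (F φ - c * (φ ^ (2 - n) - 1) / (n - 2))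
            ≤ φ ^ (n - 2) * 1 :=
              mul_le_mul_of_nonneg_left (hD φ hφ).2 (Real.rpow_nonneg hφ.1.le _)
          _ = φ ^ (n - 2) := mul_one _
      · exact h1
    simpa using t1.add t2
  -- transfer back to the original function
  apply hmain.congr'
  filter_upwards [h01] with φ hφ
  have hcancel : φ ^ (n - 2) * φ ^ (2 - n) = 1 := by
    rw [← Real.rpow_add hφ.1]
    norm_num
  have : F φ = ∫ t in φ..(1 : ℝ), (1 + a * t ^ (-n)) ^ p := rfl
  show c / (n - 2) * (1 - φ ^ (n - 2)) +
      φ ^ (n - 2) * (F φ - c * (φ ^ (2 - n) - 1) / (n - 2)) = φ ^ (n - 2) * F φ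
  have h2 : n - 2 ≠ 0 := by linarith
  linear_combination (-(c / (n - 2))) * hcancel
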